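/- arXiv:math/0408272 — 2 statements merged into one kernel-verified Lean document; each statement's English description precedes it below -/
import Mathlib

section
/- Let n and j be natural numbers with 1 ≤ 2j ≤ n. Then (in ℚ) ∑_{k=0}^{2j} [(−n)_k (−j)_k (1/2−j)_k] / [(1−j−n/2)_k ((3−n)/2−j)_k · k!] = (n+1−4j) · [n(n−1)···(n−2j+2)] / [(n+2j−2)(n+2j−3)···(n−1)], assuming n is large enough that no denominator Pochhammer symbol vanishes (e.g. n ≥ 2j+2). -/
open PowerSeries Finset

/-- Rising factorial (Pochhammer symbol) on ℚ. -/
def poch (x : ℚ) : ℕ → ℚ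
  | 0 => 1
  | k + 1 => poch x k * (x + k)


lemma poch_succ (x : ℚ) (k : ℕ) : poch x (k+1) = poch x k * (x + k) := rfl

lemma poch_dup (x : ℚ) (k : ℕ) :
    poch (2*x) (2*k) = 4^k * poch x k * poch (x + 1/2) k := by
  induction k with
  | zero => simp [poch]
  | succ k ih =>
      have h2 : 2*(k+1) = (2*k+1)+1 := by ring
      rw [h2, poch_succ, poch_succ, ih, poch_succ, poch_succ]
      push_cast
      ring

lemma poch_neg_nat (c r : ℕ) :
    poch (-(c:ℚ)) r = (-1)^r * (r.factorial : ℚ) * (c.choose r : ℚ) := by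
  induction r with
  | zero => simp [poch]
  | succ r ih =>
      rw [poch_succ, ih]
      have key : ((c.choose r : ℚ)) * ((c:ℚ) - r) = (r+1) * (c.choose (r+1) : ℚ) := by
        rcases le_or_gt r c with h | h
        · have hc : ((c.choose (r+1) * (r+1) : ℕ) : ℚ) = ((c.choose r * (c - r) : ℕ) : ℚ) := by
            rw [Nat.choose_succ_right_eq c r]
          push_cast [Nat.cast_sub h] at hc
          linarith [hc]
        · rw [Nat.choose_eq_zero_of_lt h, Nat.choose_eq_zero_of_lt (by omega)]
          simp
      rw [Nat.factorial_succ]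
      push_cast
      rw [pow_succ]
      linear_combination (-(-1:ℚ)^r * (r.factorial:ℚ)) * key

lemma term_eq (n j k : ℕ) (h3 : n ≥ 2*j+2) (hk : k ≤ 2*j) :
    poch (-(n : ℚ)) k * poch (-(j : ℚ)) k * poch (1 / 2 - (j : ℚ)) k
          / (poch (1 - (j : ℚ) - (n : ℚ) / 2) k * poch ((3 - (n : ℚ)) / 2 - (j : ℚ)) k
              * (Nat.factorial k : ℚ))
      = (-1)^k * (n.choose k : ℚ) * ((2*j).choose (2*k) : ℚ) / ((n+2*j-2).choose (2*k) : ℚ) := by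
  have e1 : (1/2 - (j:ℚ)) = -(j:ℚ) + 1/2 := by ring
  have e2 : ((3 - (n:ℚ))/2 - j) = (1 - (j:ℚ) - (n:ℚ)/2) + 1/2 := by ring
  rw [e1, e2]
  have hsq : ((-1:ℚ))^(2*k) = 1 := by
    rw [pow_mul]; norm_num
  have d1 := poch_dup (-(j:ℚ)) k
  rw [show 2 * (-(j:ℚ)) = -(((2*j:ℕ)):ℚ) by push_cast; ring, poch_neg_nat, hsq, one_mul] at d1
  have d2 := poch_dup (1 - (j:ℚ) - (n:ℚ)/2) k
  rw [show 2 * (1 - (j:ℚ) - (n:ℚ)/2) = -(((n+2*j-2:ℕ)):ℚ) by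
      push_cast [Nat.cast_sub (by omega : 2 ≤ n+2*j)]; ring,
    poch_neg_nat, hsq, one_mul] at d2
  have h4 : (4:ℚ)^k ≠ 0 := by positivity
  have p1 : poch (-(j:ℚ)) k * poch (-(j:ℚ) + 1/2) k
      = ((2*k).factorial : ℚ) * ((2*j).choose (2*k) : ℚ) / 4^k := by
    rw [eq_div_iff h4]
    linear_combination -d1
  have p2 : poch (1 - (j:ℚ) - (n:ℚ)/2) k * poch ((1 - (j:ℚ) - (n:ℚ)/2) + 1/2) k
      = ((2*k).factorial : ℚ) * ((n+2*j-2).choose (2*k) : ℚ) / 4^k := by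
    rw [eq_div_iff h4]
    linear_combination -d2
  rw [mul_assoc, p1, poch_neg_nat n k]
  rw [mul_assoc (poch (1 - (j:ℚ) - (n:ℚ)/2) k), ← mul_assoc, p2]
  have hC : ((n+2*j-2).choose (2*k) : ℚ) ≠ 0 := by
    have : 0 < (n+2*j-2).choose (2*k) := Nat.choose_pos (by omega)
    positivity
  have hf : ((2*k).factorial : ℚ) ≠ 0 := by positivity
  have hfk : (k.factorial : ℚ) ≠ 0 := by positivity
  field_simp

lemma prod_desc (n r : ℕ) (h : r ≤ n) :
    ∏ i ∈ range r, ((n:ℚ) - i) = (n.factorial : ℚ) / ((n-r).factorial : ℚ) := by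
  induction r with
  | zero => rw [Nat.sub_zero, range_zero, prod_empty,
      div_self (show ((n.factorial:ℚ)) ≠ 0 by positivity)]
  | succ r ih =>
      have h1 : (n - r) = (n - (r+1)) + 1 := by omega
      have h2 : ((n:ℚ) - r) = ((n - (r+1) : ℕ) : ℚ) + 1 := by
        push_cast [Nat.cast_sub (show r+1 ≤ n by omega)]; ring
      rw [prod_range_succ, ih (by omega), h1, Nat.factorial_succ]
      push_cast
      rw [h2]
      have hm : ((n-(r+1)).factorial : ℚ) ≠ 0 := by positivity
      have hm1 : ((n - (r+1) : ℕ) : ℚ) + 1 ≠ 0 := by positivity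
      have hA : ((n:ℚ) - ((r:ℚ)+1) + 1) ≠ 0 := by
        rw [show ((n:ℚ) - ((r:ℚ)+1) + 1) = (n:ℚ) - (r:ℚ) by ring, h2]; positivity
      field_simp

lemma prod_asc (n r : ℕ) (h : 2 ≤ n) :
    ∏ i ∈ range r, ((n:ℚ) - 1 + i) = ((n-2+r).factorial : ℚ) / ((n-2).factorial : ℚ) := by
  induction r with
  | zero => rw [Nat.add_zero, range_zero, prod_empty,
      div_self (show (((n-2).factorial:ℚ)) ≠ 0 by positivity)]
  | succ r ih =>
      have h2 : ((n:ℚ) - 1 + r) = ((n - 2 + r : ℕ) : ℚ) + 1 := by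
        push_cast [Nat.cast_sub h]; ring
      rw [prod_range_succ, ih, show n-2+(r+1) = (n-2+r)+1 by omega, Nat.factorial_succ]
      push_cast
      rw [h2]
      have hm : (((n-2+r)).factorial : ℚ) ≠ 0 := by positivity
      have hm1 : ((n - 2 + r : ℕ) : ℚ) + 1 ≠ 0 := by positivity
      field_simp
      push_cast
      ring


lemma coeff_one_sub_X_sq_pow (N p : ℕ) :
    (PowerSeries.coeff p) ((1 - PowerSeries.X^2)^N)
      = if 2 ∣ p then (-1)^(p/2) * (N.choose (p/2) : ℤ) else 0 := by
  have hexp : (1 - PowerSeries.X^2 : ℤ⟦X⟧)^N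
      = ∑ k ∈ range (N+1), (-1)^k * (N.choose k : ℤ⟦X⟧) * (PowerSeries.X)^(2*k) := by
    have : (1 - PowerSeries.X^2 : ℤ⟦X⟧) = (-PowerSeries.X^2) + 1 := by ring
    rw [this, add_pow]
    apply Finset.sum_congr rfl
    intro k _
    rw [neg_pow]
    push_cast
    ring
  rw [hexp, map_sum]
  have hterm : ∀ k ∈ range (N+1),
      (PowerSeries.coeff p) ((-1)^k * (N.choose k : ℤ⟦X⟧) * (PowerSeries.X)^(2*k))
        = if p = 2*k then (-1)^k * (N.choose k : ℤ) else 0 := by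
    intro k _
    rw [show ((-1:ℤ⟦X⟧)^k * (N.choose k : ℤ⟦X⟧) : ℤ⟦X⟧) = (PowerSeries.C (R := ℤ) ((-1)^k * N.choose k)) by simp [map_mul, map_pow]]
    rw [PowerSeries.coeff_C_mul, PowerSeries.coeff_X_pow]
    split <;> simp_all
  rw [Finset.sum_congr rfl hterm]
  by_cases hp : 2 ∣ p
  · obtain ⟨t, rfl⟩ := hp
    by_cases ht : t ≤ N
    · rw [Finset.sum_eq_single t]
      · simp [Nat.mul_div_cancel_left t (by norm_num : 0 < 2)]
      · intro b _ hb; rw [if_neg (by omega)]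
      · intro h; exact absurd (Finset.mem_range.mpr (by omega)) h
    · rw [Finset.sum_eq_zero]
      · rw [if_pos ⟨t, rfl⟩, Nat.mul_div_cancel_left t (by norm_num : 0 < 2),
          Nat.choose_eq_zero_of_lt (by omega)]
        ring
      · intro b hb
        rw [if_neg]
        simp only [mem_range] at hb; omega
  · rw [if_neg hp, Finset.sum_eq_zero]
    intro b _
    rw [if_neg]
    intro h; exact hp ⟨b, h⟩

lemma coeff_one_add_X_pow' (N m : ℕ) :
    (PowerSeries.coeff m) ((1 + PowerSeries.X)^N) = (N.choose m : ℤ) := by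
  have : ((1 + PowerSeries.X : ℤ⟦X⟧))^N = ((1 + Polynomial.X : Polynomial ℤ)^N : Polynomial ℤ) := by
    push_cast
    norm_num
  rw [this, Polynomial.coeff_coe, Polynomial.coeff_one_add_X_pow]

lemma sum_even_reindex {M : Type*} [AddCommMonoid M] (f : ℕ → M) (j : ℕ) :
    ∑ p ∈ range (2*j+1), (if 2 ∣ p then f (p/2) else 0) = ∑ k ∈ range (j+1), f k := by
  induction j with
  | zero => simp
  | succ j ih =>
      rw [show 2*(j+1)+1 = (2*j+1) + 1 + 1 by ring, Finset.sum_range_succ, Finset.sum_range_succ,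
        ih, Finset.sum_range_succ]
      rw [if_neg (by omega : ¬ 2 ∣ (2*j+1)), if_pos (by omega : 2 ∣ (2*j+1+1))]
      rw [show (2*j+1+1)/2 = j+1 by omega]
      rw [Finset.sum_range_succ, Finset.sum_range_succ]
      simp [add_assoc]

lemma key_identity (d J : ℕ) :
    ∑ k ∈ range (J+2), (-1:ℤ)^k * ((d+2).choose k : ℤ) * ((d + 2*(J+1-k)).choose d : ℤ)
      = ((d+2).choose (2*J+2) : ℤ) - ((d+2).choose (2*J+1) : ℤ) := by
  set P : ℤ⟦X⟧ := (PowerSeries.invOneSubPow ℤ (d+1)).val with hP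
  have hPval : P = PowerSeries.mk fun q => ((d+q).choose d : ℤ) :=
    PowerSeries.invOneSubPow_val_succ_eq_mk_add_choose ℤ d
  have hunit : ((1 - PowerSeries.X)^(d+1) : ℤ⟦X⟧) * P = 1 := by
    have h := (PowerSeries.invOneSubPow ℤ (d+1)).inv_val
    rwa [PowerSeries.invOneSubPow_inv_eq_one_sub_pow] at h
  have hmain : ((1 - PowerSeries.X^2)^(d+2) : ℤ⟦X⟧) * P
      = (1 - PowerSeries.X) * (1 + PowerSeries.X)^(d+2) := by
    have h1 : ((1 - PowerSeries.X^2)^(d+2) : ℤ⟦X⟧)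
        = ((1 - PowerSeries.X) * (1 + PowerSeries.X)^(d+2)) * (1 - PowerSeries.X)^(d+1) := by
      rw [show (1 - PowerSeries.X^2 : ℤ⟦X⟧) = (1-PowerSeries.X)*(1+PowerSeries.X) by ring,
        mul_pow]
      ring
    rw [h1, mul_assoc, hunit, mul_one]
  have hco := congrArg (PowerSeries.coeff (2*J+2)) hmain
  rw [PowerSeries.coeff_mul, Finset.Nat.sum_antidiagonal_eq_sum_range_succ_mk] at hco
  have hrhs : (PowerSeries.coeff (2*J+2))
      ((1 - PowerSeries.X) * (1 + PowerSeries.X)^(d+2))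
      = ((d+2).choose (2*J+2) : ℤ) - ((d+2).choose (2*J+1) : ℤ) := by
    rw [sub_mul, one_mul, map_sub, coeff_one_add_X_pow',
      show 2*J+2 = (2*J+1)+1 by ring, PowerSeries.coeff_succ_X_mul, coeff_one_add_X_pow']
  rw [hrhs] at hco
  rw [← hco]
  have hlhs : ∀ p ∈ range (2*J+2+1),
      (PowerSeries.coeff p) ((1 - PowerSeries.X^2)^(d+2)) * (PowerSeries.coeff (2*J+2-p)) P
        = if 2 ∣ p then
            ((-1:ℤ)^(p/2) * ((d+2).choose (p/2) : ℤ) * ((d + (2*J+2-2*(p/2))).choose d : ℤ)) else 0 := by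
    intro p _
    rw [coeff_one_sub_X_sq_pow, hPval, PowerSeries.coeff_mk]
    by_cases h : 2 ∣ p
    · rw [if_pos h, if_pos h, Nat.mul_div_cancel' h]
    · rw [if_neg h, if_neg h, zero_mul]
  rw [Finset.sum_congr rfl hlhs]
  rw [show 2*J+2+1 = 2*(J+1)+1 by ring,
    sum_even_reindex (fun k => ((-1:ℤ)^k * ((d+2).choose k : ℤ) * ((d + (2*J+2-2*k)).choose d : ℤ))) (J+1)]
  apply Finset.sum_congr rfl
  intro k hk
  rw [Finset.mem_range] at hk
  rw [show 2*J+2-2*k = 2*(J+1-k) by omega]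

/-- Evaluation of ₃F₂(−n, −j, 1/2−j; 1−j−n/2, (3−n)/2−j; 1), even case m = 2j. -/
theorem threeF2_even_case (n j : ℕ) (h1 : 1 ≤ 2 * j) (h2 : 2 * j ≤ n) (h3 : n ≥ 2 * j + 2) :
    ∑ k ∈ Finset.range (2 * j + 1),
        poch (-(n : ℚ)) k * poch (-(j : ℚ)) k * poch (1 / 2 - (j : ℚ)) k
          / (poch (1 - (j : ℚ) - (n : ℚ) / 2) k * poch ((3 - (n : ℚ)) / 2 - (j : ℚ)) k
              * (Nat.factorial k : ℚ))
      = ((n : ℚ) + 1 - 4 * (j : ℚ))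
          * (∏ i ∈ Finset.range (2 * j - 1), ((n : ℚ) - (i : ℚ)))
          / (∏ i ∈ Finset.range (2 * j), ((n : ℚ) - 1 + (i : ℚ))) := by
  have hj : 1 ≤ j := by omega
  have hn2 : 2 ≤ n := by omega
  -- Step 1: termwise rewrite
  rw [Finset.sum_congr rfl (fun k hk => term_eq n j k h3 (by
    rw [Finset.mem_range] at hk; omega))]
  -- Step 2: truncate the sum to range (j+1)
  rw [← Finset.sum_subset (Finset.range_subset_range.mpr (show j+1 ≤ 2*j+1 by omega))
    (fun k hk hk2 => by
      rw [Finset.mem_range] at hk; rw [Finset.mem_range] at hk2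
      rw [Nat.choose_eq_zero_of_lt (show 2*j < 2*k by omega)]
      simp)]
  -- Step 3: per-term rewrite
  have S3 : ∀ k ∈ Finset.range (j+1),
      (-1:ℚ)^k * (n.choose k : ℚ) * ((2*j).choose (2*k) : ℚ) / ((n+2*j-2).choose (2*k) : ℚ)
        = ((-1:ℚ)^k * (n.choose k : ℚ) * ((n+2*j-2-2*k).choose (n-2) : ℚ))
            / ((n+2*j-2).choose (2*j) : ℚ) := by
    intro k hk
    rw [Finset.mem_range] at hk
    have t1 := Nat.choose_mul (n := n+2*j-2) (show 2*k ≤ 2*j by omega)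
    have t2 : (n+2*j-2-2*k).choose (2*j-2*k) = (n+2*j-2-2*k).choose (n-2) := by
      rw [← Nat.choose_symm (show n-2 ≤ n+2*j-2-2*k by omega)]
      congr 1
      omega
    rw [t2] at t1
    have hC1 : ((n+2*j-2).choose (2*k) : ℚ) ≠ 0 := by
      have : 0 < (n+2*j-2).choose (2*k) := Nat.choose_pos (by omega); positivity
    have hC2 : ((n+2*j-2).choose (2*j) : ℚ) ≠ 0 := by
      have : 0 < (n+2*j-2).choose (2*j) := Nat.choose_pos (by omega); positivity
    have t1q : ((n+2*j-2).choose (2*j) : ℚ) * ((2*j).choose (2*k) : ℚ)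
        = ((n+2*j-2).choose (2*k) : ℚ) * ((n+2*j-2-2*k).choose (n-2) : ℚ) := by
      exact_mod_cast t1
    field_simp
    linear_combination (n.choose k : ℚ) * t1q
  rw [Finset.sum_congr rfl S3]
  -- Step 4: sum the integer identity
  rw [← Finset.sum_div]
  have KEYQ : ∑ k ∈ Finset.range (j+1),
      ((-1:ℚ)^k * (n.choose k : ℚ) * ((n+2*j-2-2*k).choose (n-2) : ℚ))
        = (n.choose (2*j) : ℚ) - (n.choose (2*j-1) : ℚ) := by
    have h := key_identity (n-2) (j-1)
    rw [show (n-2)+2 = n by omega, show (j-1)+2 = j+1 by omega,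
      show 2*(j-1)+2 = 2*j by omega, show 2*(j-1)+1 = 2*j-1 by omega] at h
    have hq := congrArg (fun t : ℤ => (t : ℚ)) h
    push_cast at hq
    rw [← hq]
    apply Finset.sum_congr rfl
    intro k hk
    rw [Finset.mem_range] at hk
    have e : n+2*j-2-2*k = n-2+2*((j-1)+1-k) := by omega
    rw [e]
  rw [KEYQ]
  -- Step 5: final scalar identity
  rw [prod_desc n (2*j-1) (by omega), prod_asc n (2*j) hn2]
  rw [Nat.cast_choose ℚ (show 2*j ≤ n by omega),
    Nat.cast_choose ℚ (show 2*j-1 ≤ n by omega),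
    Nat.cast_choose ℚ (show 2*j ≤ n+2*j-2 by omega)]
  rw [show n+2*j-2-(2*j) = n-2 by omega, show n - (2*j-1) = n-2*j+1 by omega,
    show n-2+2*j = n+2*j-2 by omega]
  have f1 : ((n-2*j+1).factorial : ℚ) = ((n:ℚ)-2*j+1) * ((n-2*j).factorial : ℚ) := by
    rw [show n-2*j+1 = (n-2*j)+1 by omega, Nat.factorial_succ]
    push_cast [Nat.cast_sub (show 2*j ≤ n by omega)]
    ring
  have f2 : ((2*j).factorial : ℚ) = (2*(j:ℚ)) * ((2*j-1).factorial : ℚ) := by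
    rw [show 2*j = (2*j-1)+1 by omega, Nat.factorial_succ]
    push_cast [Nat.cast_sub (show 1 ≤ 2*j by omega)]
    ring
  rw [f1, f2]
  have hne : ((n:ℚ)-2*j+1) ≠ 0 := by
    have hc : ((n-2*j+1 : ℕ):ℚ) = (n:ℚ)-2*j+1 := by
      push_cast [Nat.cast_sub (show 2*j ≤ n by omega)]; ring
    rw [← hc]; positivity
  have g1 : ((n).factorial : ℚ) ≠ 0 := by positivity
  have g2 : ((n-2*j).factorial : ℚ) ≠ 0 := by positivity
  have g3 : ((2*j-1).factorial : ℚ) ≠ 0 := by positivity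
  have g4 : ((n-2).factorial : ℚ) ≠ 0 := by positivity
  have g5 : ((n+2*j-2).factorial : ℚ) ≠ 0 := by positivity
  have g6 : (2*(j:ℚ)) ≠ 0 := by positivity
  field_simp
  ring
end

section
/- For natural numbers m, n, r with 2 ≤ m, the quantity I(m,n,r) := ∑_{s=0}^{⌊m/2⌋} (−1)^s C(r,s) C(n+m−2−2s, m−2s) satisfies I(m,n,r) = C(n+m−2, m) · ∑_{s=0}^{⌊m/2⌋} [(−r)_s (−m/2)_s ((−m+1)/2)_s] / [((−n−m+2)/2)_s ((−n−m+3)/2)_s · s!] in ℚ, provided n+m−2 ≥ m and the denominator Pochhammer symbols are nonzero for all s ≤ ⌊m/2⌋. -/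
lemma poch_neg_nat_s16 (r : ℕ) : ∀ s : ℕ, poch (-(r : ℚ)) s
    = (-1) ^ s * (Nat.factorial s : ℚ) * (Nat.choose r s : ℚ)
  | 0 => by simp [poch]
  | s + 1 => by
    rw [poch, poch_neg_nat_s16 r s]
    have hc : (r.choose s : ℚ) * ((r : ℚ) - s) = (r.choose (s + 1) : ℚ) * (s + 1) := by
      rcases lt_trichotomy r s with h | h | h
      · rw [Nat.choose_eq_zero_of_lt h, Nat.choose_eq_zero_of_lt (by omega)]
        push_cast; ring
      · subst h
        simp [Nat.choose_succ_self]
      · have key : r.choose (s + 1) * (s + 1) = r.choose s * (r - s) :=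
          Nat.choose_succ_right_eq r s
        have := congrArg (fun x : ℕ => (x : ℚ)) key
        push_cast [Nat.cast_sub (by omega : s ≤ r)] at this
        linarith
    push_cast [Nat.factorial_succ]
    have h2 : -(r : ℚ) + s = -((r : ℚ) - s) := by ring
    rw [h2]
    calc (-1 : ℚ) ^ s * s.factorial * r.choose s * -((r : ℚ) - s)
        = (-1) ^ s * s.factorial * -((r.choose s : ℚ) * ((r : ℚ) - s)) := by ring
      _ = (-1) ^ s * s.factorial * -((r.choose (s + 1) : ℚ) * (s + 1)) := by rw [hc]
      _ = (-1) ^ (s + 1) * ((s + 1) * s.factorial) * r.choose (s + 1) := by ring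

lemma poch_half (N : ℕ) : ∀ s : ℕ, poch (-(N : ℚ) / 2) s * poch ((-(N : ℚ) + 1) / 2) s * 4 ^ s
    = (N.descFactorial (2 * s) : ℚ)
  | 0 => by simp [poch]
  | s + 1 => by
    have IH := poch_half N s
    rw [poch, poch]
    have hexp : poch (-(N : ℚ) / 2) s * (-(N : ℚ) / 2 + s)
        * (poch ((-(N : ℚ) + 1) / 2) s * ((-(N : ℚ) + 1) / 2 + s)) * 4 ^ (s + 1)
        = (poch (-(N : ℚ) / 2) s * poch ((-(N : ℚ) + 1) / 2) s * 4 ^ s)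
          * (((N : ℚ) - 2 * s) * ((N : ℚ) - 2 * s - 1)) := by ring
    rw [hexp, IH]
    have h2 : 2 * (s + 1) = 2 * s + 1 + 1 := by ring
    rw [h2, Nat.descFactorial_succ, Nat.descFactorial_succ]
    rcases le_or_gt (2 * s + 2) N with h | h
    · push_cast [Nat.cast_sub (by omega : 2 * s + 1 ≤ N), Nat.cast_sub (by omega : 2 * s ≤ N)]
      ring
    · rcases Nat.lt_or_ge N (2 * s) with h'' | h''
      · rw [Nat.descFactorial_of_lt h'']; push_cast; ring
      · have e1 : N - (2 * s + 1) = 0 := by omega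
        rw [e1]
        rcases (by omega : N = 2 * s ∨ N = 2 * s + 1) with h3 | h3
        · have e2 : N - 2 * s = 0 := by omega
          rw [e2]; subst h3; push_cast; ring
        · have e2 : N - 2 * s = 1 := by omega
          rw [e2]; subst h3; push_cast; ring

/-- Theorem 1: the alternating sum for I_{m,n}(r) in hypergeometric ₃F₂ form. -/
theorem dimension_hypergeometric_form (m n r : ℕ) (hm : 2 ≤ m) (hnm : m ≤ n + m - 2)
    (hd : ∀ s ≤ m / 2,
      poch ((-(n : ℚ) - (m : ℚ) + 2) / 2) s ≠ 0
        ∧ poch ((-(n : ℚ) - (m : ℚ) + 3) / 2) s ≠ 0) :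
    ∑ s ∈ Finset.range (m / 2 + 1),
        (-1 : ℚ) ^ s * (Nat.choose r s : ℚ)
          * (Nat.choose (n + m - 2 - 2 * s) (m - 2 * s) : ℚ)
      = (Nat.choose (n + m - 2) m : ℚ)
          * ∑ s ∈ Finset.range (m / 2 + 1),
              poch (-(r : ℚ)) s * poch (-(m : ℚ) / 2) s * poch ((-(m : ℚ) + 1) / 2) s
                / (poch ((-(n : ℚ) - (m : ℚ) + 2) / 2) s
                    * poch ((-(n : ℚ) - (m : ℚ) + 3) / 2) s * (Nat.factorial s : ℚ)) := by
  set a := n + m - 2 with ha_def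
  have hn2 : 2 ≤ n := by omega
  have haQ : (a : ℚ) = (n : ℚ) + m - 2 := by
    rw [ha_def]; push_cast [Nat.cast_sub (by omega : 2 ≤ n + m)]; ring
  have hc1 : ((-(n : ℚ) - (m : ℚ) + 2) / 2) = -(a : ℚ) / 2 := by rw [haQ]; ring
  have hc2 : ((-(n : ℚ) - (m : ℚ) + 3) / 2) = (-(a : ℚ) + 1) / 2 := by rw [haQ]; ring
  rw [Finset.mul_sum]
  apply Finset.sum_congr rfl
  intro s hs
  rw [Finset.mem_range] at hs
  have h2s : 2 * s ≤ m := by omega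
  have h2sa : 2 * s ≤ a := le_trans h2s hnm
  rw [hc1, hc2, poch_neg_nat_s16,
    mul_assoc ((-1 : ℚ) ^ s * (s.factorial : ℚ) * (r.choose s : ℚ))]
  have h4 : (4 : ℚ) ^ s ≠ 0 := by positivity
  have hPm : poch (-(m : ℚ) / 2) s * poch ((-(m : ℚ) + 1) / 2) s
      = (m.descFactorial (2 * s) : ℚ) / 4 ^ s := by
    rw [eq_div_iff h4]; exact poch_half m s
  have hPa : poch (-(a : ℚ) / 2) s * poch ((-(a : ℚ) + 1) / 2) s
      = (a.descFactorial (2 * s) : ℚ) / 4 ^ s := by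
    rw [eq_div_iff h4]; exact poch_half a s
  rw [hPm]
  rw [show poch (-(a : ℚ) / 2) s * poch ((-(a : ℚ) + 1) / 2) s * (s.factorial : ℚ)
      = (a.descFactorial (2 * s) : ℚ) / 4 ^ s * (s.factorial : ℚ) by rw [hPa]]
  have hdm : (m.descFactorial (2 * s) : ℚ)
      = (m.factorial : ℚ) / ((m - 2 * s).factorial : ℚ) := by
    rw [eq_div_iff (by exact_mod_cast (m - 2 * s).factorial_ne_zero)]
    rw [mul_comm]
    exact_mod_cast congrArg (fun x : ℕ => (x : ℚ)) (Nat.factorial_mul_descFactorial h2s)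
  have hda : (a.descFactorial (2 * s) : ℚ)
      = (a.factorial : ℚ) / ((a - 2 * s).factorial : ℚ) := by
    rw [eq_div_iff (by exact_mod_cast (a - 2 * s).factorial_ne_zero)]
    rw [mul_comm]
    exact_mod_cast congrArg (fun x : ℕ => (x : ℚ)) (Nat.factorial_mul_descFactorial h2sa)
  have hch1 : (Nat.choose a m : ℚ)
      = (a.factorial : ℚ) / ((m.factorial : ℚ) * ((a - m).factorial : ℚ)) :=
    Nat.cast_choose ℚ hnm
  have hch2 : (Nat.choose (a - 2 * s) (m - 2 * s) : ℚ)
      = ((a - 2 * s).factorial : ℚ)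
        / (((m - 2 * s).factorial : ℚ) * ((a - m).factorial : ℚ)) := by
    have hle : m - 2 * s ≤ a - 2 * s := by omega
    have heq : a - 2 * s - (m - 2 * s) = a - m := by omega
    rw [Nat.cast_choose ℚ hle, heq]
  have ha2 : n + m - 2 - 2 * s = a - 2 * s := rfl
  rw [ha2, hch1, hch2, hdm, hda]
  have e1 : ((m - 2 * s).factorial : ℚ) ≠ 0 := by exact_mod_cast (m - 2 * s).factorial_ne_zero
  have e2 : ((a - 2 * s).factorial : ℚ) ≠ 0 := by exact_mod_cast (a - 2 * s).factorial_ne_zero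
  have e3 : ((a - m).factorial : ℚ) ≠ 0 := by exact_mod_cast (a - m).factorial_ne_zero
  have e4 : ((m : ℕ).factorial : ℚ) ≠ 0 := by exact_mod_cast m.factorial_ne_zero
  have e5 : ((a : ℕ).factorial : ℚ) ≠ 0 := by exact_mod_cast a.factorial_ne_zero
  have e6 : ((s : ℕ).factorial : ℚ) ≠ 0 := by exact_mod_cast s.factorial_ne_zero
  field_simp
end
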